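/- arXiv:2602.21021 — 6 statements merged into one kernel-verified Lean document; each statement's English description precedes it below -/
import Mathlib

section
/- Let σ be a nonzero finite Borel measure on the unit circle 𝕊¹ ⊆ ℂ. Suppose that for every α ∈ 𝕊¹ the translated measure σ^α (the pushforward of σ under the map z ↦ α·z) is absolutely continuous with respect to σ. Then σ and the Haar probability measure on 𝕊¹ are mutually absolutely continuous (i.e. σ is equivalent to the Haar measure). -/
open MeasureTheory

noncomputable instance : MeasurableSpace Circle := borel Circle
instance : BorelSpace Circle := ⟨rfl⟩

/-- If `σ` is a nonzero finite Borel measure on the unit circle such that every rotate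
`σ^α` is absolutely continuous with respect to `σ`, then `σ` is equivalent to the Haar
probability measure on the circle. -/
theorem stmt0 (σ : Measure Circle) [IsFiniteMeasure σ] (hσ : σ ≠ 0)
    (h : ∀ α : Circle, σ.map (fun z => α * z) ≪ σ) :
    σ ≪ (Measure.haar : Measure Circle) ∧ (Measure.haar : Measure Circle) ≪ σ := by
  set ν : Measure Circle := Measure.haar with hν
  have key : ∀ A : Set Circle, MeasurableSet A →
      ∫⁻ α, σ ((fun z => α * z) ⁻¹' A) ∂ν = ν A * σ Set.univ := by
    intro A hA
    have hm : Measurable fun p : Circle × Circle =>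
        A.indicator (fun _ => (1 : ENNReal)) (p.1 * p.2) :=
      (measurable_const.indicator hA).comp measurable_mul
    calc ∫⁻ α, σ ((fun z => α * z) ⁻¹' A) ∂ν
        = ∫⁻ α, ∫⁻ z, A.indicator (fun _ => (1 : ENNReal)) (α * z) ∂σ ∂ν := by
          refine lintegral_congr fun α => ?_
          rw [← lintegral_indicator_one (hA.preimage (measurable_const_mul α))]
          exact lintegral_congr fun z => rfl
      _ = ∫⁻ z, ∫⁻ α, A.indicator (fun _ => (1 : ENNReal)) (α * z) ∂ν ∂σ :=
          lintegral_lintegral_swap hm.aemeasurable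
      _ = ∫⁻ z, ν A ∂σ := by
          refine lintegral_congr fun z => ?_
          rw [← lintegral_indicator_one hA]
          exact (measurePreserving_mul_right ν z).lintegral_comp
            (measurable_const.indicator hA)
      _ = ν A * σ Set.univ := lintegral_const _
  constructor
  · refine Measure.AbsolutelyContinuous.mk fun A hA h0 => ?_
    have h1 : ∫⁻ α, σ ((fun z => α * z) ⁻¹' A) ∂ν = 0 := by rw [key A hA, h0, zero_mul]
    have hmeas : Measurable fun α : Circle => σ ((fun z => α * z) ⁻¹' A) := by
      have hm : Measurable fun p : Circle × Circle =>
          A.indicator (fun _ => (1 : ENNReal)) (p.1 * p.2) :=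
        (measurable_const.indicator hA).comp measurable_mul
      have heq : (fun α : Circle => σ ((fun z => α * z) ⁻¹' A)) =
          fun α => ∫⁻ z, A.indicator (fun _ => (1 : ENNReal)) (α * z) ∂σ := by
        funext α
        rw [← lintegral_indicator_one (hA.preimage (measurable_const_mul α))]
        exact lintegral_congr fun z => rfl
      rw [heq]
      exact hm.lintegral_prod_right'
    rw [lintegral_eq_zero_iff hmeas] at h1
    have : ∃ α : Circle, σ ((fun z => α * z) ⁻¹' A) = 0 := by
      have hν0 : ν ≠ 0 := by
        rw [hν]; exact NeZero.ne _
      haveI : (ae ν).NeBot := ae_neBot.mpr hν0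
      exact h1.exists
    obtain ⟨α, hα⟩ := this
    have h2 := h α⁻¹ hα
    rw [Measure.map_apply (measurable_const_mul α⁻¹)
      (hA.preimage (measurable_const_mul α))] at h2
    have hset : (fun z => α⁻¹ * z) ⁻¹' ((fun z => α * z) ⁻¹' A) = A := by
      ext z; simp [← mul_assoc]
    rwa [hset] at h2
  · refine Measure.AbsolutelyContinuous.mk fun A hA h0 => ?_
    have h1 : ∀ α : Circle, σ ((fun z => α * z) ⁻¹' A) = 0 := fun α => by
      have := h α h0
      rwa [Measure.map_apply (measurable_const_mul α) hA] at this
    have h2 : ν A * σ Set.univ = 0 := by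
      rw [← key A hA]; simp [h1]
    have hσu : σ Set.univ ≠ 0 := fun hu => hσ (Measure.measure_univ_eq_zero.mp hu)
    rcases mul_eq_zero.mp h2 with h3 | h3
    · exact h3
    · exact absurd h3 hσu
end

section
/- Let d ≥ 1 and let f : ℝ^d → ℝ be continuously differentiable (of class C¹). Suppose the set {x ∈ ℝ^d : ∇f(x) = 0} has Lebesgue measure zero in ℝ^d. Then the pushforward measure f_*(m_{ℝ^d}) of the Lebesgue measure on ℝ^d under f is absolutely continuous with respect to the Lebesgue measure m_ℝ on ℝ. -/
open MeasureTheory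

/-- Key local lemma: if `f` is `C¹` and `x` is a regular point lying in `f ⁻¹' A` with `A`
a null set, then some neighborhood of `x` meets `f ⁻¹' A` in a null set. -/
theorem stmt1_aux (d : ℕ) (f : (Fin d → ℝ) → ℝ) (hf : ContDiff ℝ 1 f)
    {A : Set ℝ} (hA : MeasurableSet A) (hA0 : volume A = 0)
    {x : Fin d → ℝ} (hx : fderiv ℝ f x ≠ 0) :
    ∃ v ∈ nhds x, volume (f ⁻¹' A ∩ v) = 0 := by
  set Df := fderiv ℝ f x with hDf
  -- choose a coordinate with nonzero partial derivative
  have hex : ∃ i, Df (Pi.single i 1) ≠ 0 := by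
    by_contra h
    push_neg at h
    apply hx
    ext v
    have hv : v = ∑ j, Pi.single j (v j) := (Finset.univ_sum_single v).symm
    rw [hv, map_sum]
    simp only [ContinuousLinearMap.zero_apply]
    refine Finset.sum_eq_zero fun j _ => ?_
    have : (Pi.single j (v j) : Fin d → ℝ) = (v j) • (Pi.single j (1:ℝ) : Fin d → ℝ) := by
      rw [← Pi.single_smul, smul_eq_mul, mul_one]
    rw [this, _root_.map_smul, h j, smul_zero]
  obtain ⟨i, hi⟩ := hex
  classical
  -- the auxiliary map F
  set F : (Fin d → ℝ) → (Fin d → ℝ) := fun y j => if j = i then f y else y j with hFdef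
  have hFi : ∀ y, F y i = f y := fun y => if_pos rfl
  have hFcd : ContDiff ℝ 1 F := by
    rw [contDiff_pi]
    intro j
    by_cases h : j = i
    · simpa [hFdef, h] using hf
    · simpa [hFdef, h] using (contDiff_apply ℝ ℝ j (n := (1 : WithTop ℕ∞)))
  -- derivative of F at x
  set L : (Fin d → ℝ) →L[ℝ] (Fin d → ℝ) :=
    ContinuousLinearMap.pi (fun j => if j = i then Df else ContinuousLinearMap.proj j) with hL
  have hLapp : ∀ v j, L v j = if j = i then Df v else v j := by
    intro v j
    by_cases h : j = i <;> simp [hL, h]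
  have hFL : HasFDerivAt F L x := by
    rw [hasFDerivAt_pi']
    intro j
    have : (ContinuousLinearMap.proj j).comp L =
        (if j = i then Df else ContinuousLinearMap.proj j) := by
      rw [hL, ContinuousLinearMap.proj_pi]
    rw [this]
    by_cases h : j = i
    · have hfd : HasFDerivAt f Df x := by
        rw [hDf]; exact (hf.differentiable one_ne_zero x).hasFDerivAt
      have : (fun y => F y j) = f := by
        funext y; simp [hFdef, h]
      rw [this, if_pos h]
      exact hfd
    · have : (fun y => F y j) = fun y => (ContinuousLinearMap.proj j :
          (Fin d → ℝ) →L[ℝ] ℝ) y := by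
        funext y; simp [hFdef, h]
      rw [this, if_neg h]
      exact (ContinuousLinearMap.proj j : (Fin d → ℝ) →L[ℝ] ℝ).hasFDerivAt
  -- L is a linear equivalence
  have hinj : Function.Injective L.toLinearMap := by
    intro v w hvw
    have h0 : L (v - w) = 0 := by
      rw [map_sub]
      simpa using congrArg (fun z => z - L w) hvw
    set u := v - w with hu
    have hcoord : ∀ j, j ≠ i → u j = 0 := by
      intro j hj
      have := congrFun h0 j
      rwa [hLapp, if_neg hj] at this
    have hDu : Df u = 0 := by
      have := congrFun h0 i
      rwa [hLapp, if_pos rfl] at this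
    have husingle : u = (u i) • (Pi.single i (1:ℝ) : Fin d → ℝ) := by
      funext j
      by_cases h : j = i
      · subst h; simp
      · simp [hcoord j h, h, Pi.single_apply]
    have : u i * Df (Pi.single i 1) = 0 := by
      rw [← smul_eq_mul, ← _root_.map_smul, ← husingle, hDu]
    have hui : u i = 0 := by
      rcases mul_eq_zero.1 this with h | h
      · exact h
      · exact absurd h hi
    have : u = 0 := by rw [husingle, hui, zero_smul]
    exact sub_eq_zero.1 (hu ▸ this)
  have hbij : Function.Bijective L.toLinearMap :=
    ⟨hinj, (LinearMap.injective_iff_surjective.1 hinj)⟩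
  set e : (Fin d → ℝ) ≃L[ℝ] (Fin d → ℝ) :=
    (LinearEquiv.ofBijective L.toLinearMap hbij).toContinuousLinearEquiv with he
  have hecoe : (e : (Fin d → ℝ) →L[ℝ] (Fin d → ℝ)) = L := by
    ext v : 1; rfl
  have hF' : HasFDerivAt F (e : (Fin d → ℝ) →L[ℝ] (Fin d → ℝ)) x := by
    rw [hecoe]; exact hFL
  have hFx : ContDiffAt ℝ 1 F x := hFcd.contDiffAt
  -- local inverse
  set Φ := hFx.toOpenPartialHomeomorph F hF' one_ne_zero with hΦ
  set g := hFx.localInverse hF' one_ne_zero with hg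
  have hΦcoe : (Φ : (Fin d → ℝ) → (Fin d → ℝ)) = F :=
    hFx.toOpenPartialHomeomorph_coe hF' one_ne_zero
  have hxsrc : x ∈ Φ.source := hFx.mem_toOpenPartialHomeomorph_source hF' one_ne_zero
  have hFxtgt : F x ∈ Φ.target := hFx.image_mem_toOpenPartialHomeomorph_target hF' one_ne_zero
  have hgsymm : g = Φ.symm := rfl
  have hgC1 : ContDiffAt ℝ 1 g (F x) := hFx.to_localInverse hF' one_ne_zero
  obtain ⟨t, ht_mem, htg⟩ : ∃ t ∈ nhds (F x), ContDiffOn ℝ 1 g t :=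
    hgC1.contDiffOn le_rfl (by simp)
  obtain ⟨t', ht'sub, ht'open, hFxt'⟩ := mem_nhds_iff.1 ht_mem
  set w := t' ∩ Φ.target with hw
  have hwopen : IsOpen w := ht'open.inter Φ.open_target
  have hFxw : F x ∈ w := ⟨hFxt', hFxtgt⟩
  set v := Φ.source ∩ F ⁻¹' w with hv
  have hvnhds : v ∈ nhds x := by
    refine (Φ.open_source.inter (hwopen.preimage (hFcd.continuous))).mem_nhds ⟨hxsrc, hFxw⟩
  -- the null set N in ℝ^d
  set N : Set (Fin d → ℝ) := {z | z i ∈ A} with hN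
  have hN0 : volume N = 0 := by
    have hNeq : N = Set.pi Set.univ (fun j => if j = i then A else Set.univ) := by
      ext z
      simp only [hN, Set.mem_setOf_eq, Set.mem_pi, Set.mem_univ, forall_true_left]
      constructor
      · intro hz j
        by_cases h : j = i
        · subst h; simpa using hz
        · simp [h]
      · intro hz
        have := hz i
        simpa using this
    rw [hNeq]
    rw [show (volume : Measure (Fin d → ℝ)) = Measure.pi (fun _ => volume) from rfl,
      Measure.pi_pi]
    exact Finset.prod_eq_zero (Finset.mem_univ i) (by simp [hA0])
  refine ⟨v, hvnhds, ?_⟩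
  have hsub : f ⁻¹' A ∩ v ⊆ g '' (N ∩ w) := by
    rintro y ⟨hyA, hysrc, hyw⟩
    refine ⟨F y, ⟨?_, hyw⟩, ?_⟩
    · show F y i ∈ A
      rw [hFi]; exact hyA
    · rw [hgsymm, ← hΦcoe]
      exact Φ.left_inv hysrc
  refine measure_mono_null hsub ?_
  have hdiff : DifferentiableOn ℝ g (N ∩ w) := by
    have : N ∩ w ⊆ t := fun z hz => ht'sub hz.2.1
    exact (htg.mono this).differentiableOn one_ne_zero
  exact addHaar_image_eq_zero_of_differentiableOn_of_addHaar_eq_zero volume hdiff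
    (measure_mono_null Set.inter_subset_left hN0)

/-- If `f : ℝ^d → ℝ` is `C¹` and its critical set has Lebesgue measure zero, then the
pushforward of Lebesgue measure under `f` is absolutely continuous with respect to
Lebesgue measure on `ℝ`. -/
theorem stmt1 (d : ℕ) (hd : 1 ≤ d) (f : (Fin d → ℝ) → ℝ) (hf : ContDiff ℝ 1 f)
    (hcrit : volume {x : Fin d → ℝ | fderiv ℝ f x = 0} = 0) :
    (volume : Measure (Fin d → ℝ)).map f ≪ (volume : Measure ℝ) := by
  refine Measure.AbsolutelyContinuous.mk ?_
  intro A hA hA0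
  rw [Measure.map_apply (hf.continuous.measurable) hA]
  set s := f ⁻¹' A \ {x : Fin d → ℝ | fderiv ℝ f x = 0} with hs
  have hsnull : volume s = 0 := by
    refine measure_null_of_locally_null s fun x hx => ?_
    obtain ⟨v, hvnhds, hv0⟩ := stmt1_aux d f hf hA hA0 hx.2
    refine ⟨s ∩ v, Filter.inter_mem self_mem_nhdsWithin
      (nhdsWithin_le_nhds hvnhds), ?_⟩
    exact measure_mono_null (Set.inter_subset_inter_left v Set.diff_subset) hv0
  refine le_antisymm ?_ (zero_le)
  calc volume (f ⁻¹' A)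
      ≤ volume (s ∪ {x : Fin d → ℝ | fderiv ℝ f x = 0}) := by
        refine measure_mono fun y hy => ?_
        by_cases h : fderiv ℝ f y = 0
        · exact Or.inr h
        · exact Or.inl ⟨hy, h⟩
    _ ≤ volume s + volume {x : Fin d → ℝ | fderiv ℝ f x = 0} := measure_union_le _ _
    _ = 0 := by rw [hsnull, hcrit, add_zero]
end

section
/- Let d ≥ 1 and let p : ℝ^d → ℝ be a polynomial function (the evaluation of a multivariate real polynomial) which is not constant. Then the pushforward p_*(m_{ℝ^d}) of the Lebesgue measure on ℝ^d under p is absolutely continuous with respect to the Lebesgue measure on ℝ. -/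
open MeasureTheory Set

lemma poly1d_preimage_null (q : Polynomial ℝ) (hq : q.natDegree ≠ 0)
    {A : Set ℝ} (hA : MeasurableSet A) (h0 : volume A = 0) :
    volume {t : ℝ | q.eval t ∈ A} = 0 := by
  have hd : q.derivative ≠ 0 := fun h =>
    hq (Polynomial.natDegree_eq_zero_of_derivative_eq_zero h)
  set C : Set ℝ := {t | q.derivative.eval t = 0} with hCdef
  have hCfin : C.Finite := Polynomial.finite_setOf_isRoot hd
  have key : ∀ a b : ℝ, Ioo a b ∩ C = ∅ →
      volume ({t | q.eval t ∈ A} ∩ Ioo a b) = 0 := by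
    intro a b hab
    have hne : ∀ x ∈ Ioo a b, q.derivative.eval x ≠ 0 := by
      intro x hx h
      have : x ∈ Ioo a b ∩ C := ⟨hx, h⟩
      rw [hab] at this
      exact this
    have hsign : (∀ x ∈ Ioo a b, 0 < q.derivative.eval x) ∨
        (∀ x ∈ Ioo a b, q.derivative.eval x < 0) := by
      by_contra h
      push_neg at h
      obtain ⟨⟨x, hx, hx'⟩, ⟨y, hy, hy'⟩⟩ := h
      have hx0 : q.derivative.eval x < 0 := lt_of_le_of_ne hx' (hne x hx)
      have hy0 : 0 < q.derivative.eval y := lt_of_le_of_ne hy' (Ne.symm (hne y hy))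
      have hcont : ContinuousOn (fun t => q.derivative.eval t) (uIcc x y) :=
        (q.derivative.continuous).continuousOn
      have h0m : (0 : ℝ) ∈ uIcc (q.derivative.eval x) (q.derivative.eval y) :=
        mem_uIcc.2 (Or.inl ⟨le_of_lt hx0, le_of_lt hy0⟩)
      obtain ⟨z, hz, hz0⟩ := intermediate_value_uIcc hcont h0m
      have hzI : z ∈ Ioo a b := Set.ordConnected_Ioo.uIcc_subset hx hy hz
      exact hne z hzI hz0
    have hinj : InjOn (fun t => q.eval t) (Ioo a b) := by
      rcases hsign with hpos | hneg
      · exact (strictMonoOn_of_deriv_pos (convex_Ioo a b)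
          q.continuous.continuousOn (fun x hx => by
            rw [interior_Ioo] at hx
            rw [Polynomial.deriv]
            exact hpos x hx)).injOn
      · exact (strictAntiOn_of_deriv_neg (convex_Ioo a b)
          q.continuous.continuousOn (fun x hx => by
            rw [interior_Ioo] at hx
            rw [Polynomial.deriv]
            exact hneg x hx)).injOn
    set T : Set ℝ := {t | q.eval t ∈ A} ∩ Ioo a b with hTdef
    have hT : MeasurableSet T :=
      (q.continuous.measurable hA).inter measurableSet_Ioo
    have hderiv : ∀ x ∈ T, HasFDerivWithinAt (fun t => q.eval t)
        ((1 : ℝ →L[ℝ] ℝ).smulRight (q.derivative.eval x)) T x :=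
      fun x _ => (q.hasDerivAt x).hasDerivWithinAt.hasFDerivWithinAt
    have hinjT : InjOn (fun t => q.eval t) T := hinj.mono inter_subset_right
    have himg : volume ((fun t => q.eval t) '' T) = 0 := by
      apply measure_mono_null _ h0
      rintro _ ⟨t, ht, rfl⟩
      exact ht.1
    have hint : (∫⁻ x in T, ENNReal.ofReal
        |((1 : ℝ →L[ℝ] ℝ).smulRight (q.derivative.eval x)).det| ∂volume) = 0 := by
      rw [lintegral_abs_det_fderiv_eq_addHaar_image volume hT hderiv hinjT]
      exact himg
    simp only [ContinuousLinearMap.smulRight_one_eq_toSpanSingleton, ContinuousLinearMap.det_toSpanSingleton] at hint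
    have hae := (setLIntegral_eq_zero_iff hT
      (ENNReal.measurable_ofReal.comp (continuous_abs.comp q.derivative.continuous).measurable)).mp hint
    refine measure_eq_zero_iff_ae_notMem.mpr ?_
    filter_upwards [hae] with x h1
    intro hxT
    apply hne x hxT.2
    have h2 := h1 hxT
    simp only [Function.comp_apply, ENNReal.ofReal_eq_zero] at h2
    exact abs_nonpos_iff.mp h2
  -- cover
  classical
  let V : ℚ × ℚ → Set ℝ := fun s =>
    if Ioo ((s.1 : ℝ)) ((s.2 : ℝ)) ∩ C = ∅ then
      {t | q.eval t ∈ A} ∩ Ioo ((s.1 : ℝ)) ((s.2 : ℝ)) else ∅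
  have hVnull : ∀ s, volume (V s) = 0 := by
    intro s
    show volume (if Ioo ((s.1 : ℝ)) ((s.2 : ℝ)) ∩ C = ∅ then
      {t | q.eval t ∈ A} ∩ Ioo ((s.1 : ℝ)) ((s.2 : ℝ)) else ∅) = 0
    split_ifs with h
    · exact key _ _ h
    · simp
  have hcover : {t | q.eval t ∈ A} ⊆ C ∪ ⋃ s : ℚ × ℚ, V s := by
    intro t ht
    by_cases htC : t ∈ C
    · exact Or.inl htC
    · right
      have hopen : IsOpen Cᶜ := hCfin.isClosed.isOpen_compl
      obtain ⟨ε, hε, hball⟩ := Metric.isOpen_iff.mp hopen t htC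
      obtain ⟨a, ha1, ha2⟩ := exists_rat_btwn (show t - ε < t by linarith)
      obtain ⟨b, hb1, hb2⟩ := exists_rat_btwn (show t < t + ε by linarith)
      have hsub : Ioo ((a : ℝ)) ((b : ℝ)) ∩ C = ∅ := by
        rw [Set.eq_empty_iff_forall_notMem]
        rintro x ⟨hx, hxC⟩
        have : x ∈ Metric.ball t ε := by
          rw [Real.ball_eq_Ioo]
          exact ⟨ha1.trans hx.1, hx.2.trans hb2⟩
        exact (hball this) hxC
      refine Set.mem_iUnion.2 ⟨(a, b), ?_⟩
      show t ∈ (if Ioo ((a : ℝ)) ((b : ℝ)) ∩ C = ∅ then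
        {t | q.eval t ∈ A} ∩ Ioo ((a : ℝ)) ((b : ℝ)) else ∅)
      rw [if_pos hsub]
      exact ⟨ht, ha2, hb1⟩
  apply measure_mono_null hcover
  apply measure_union_null (hCfin.measure_zero volume)
  exact measure_iUnion_null hVnull

lemma slice_null {n : ℕ} {S : Set (Fin (n + 1) → ℝ)} (hS : MeasurableSet S)
    (h : ∀ᵐ y : Fin n → ℝ, volume {a : ℝ | Fin.cons a y ∈ S} = 0) :
    volume S = 0 := by
  set e := MeasurableEquiv.piFinSuccAbove (fun _ : Fin (n + 1) => ℝ) 0 with he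
  have hmp := volume_preserving_piFinSuccAbove (fun _ : Fin (n + 1) => ℝ) 0
  have hims : e.symm ⁻¹' S = {p : ℝ × (Fin n → ℝ) | Fin.cons p.1 p.2 ∈ S} := by
    ext p
    simp only [Set.mem_preimage, Set.mem_setOf_eq, he,
      MeasurableEquiv.piFinSuccAbove_symm_apply]
    rw [Fin.insertNthEquiv_zero]
    rfl
  have hSeq : S = e ⁻¹' (e.symm ⁻¹' S) := by
    ext x; simp
  have hmeas : MeasurableSet (e.symm ⁻¹' S) := e.symm.measurable hS
  rw [hSeq, hmp.measure_preimage hmeas.nullMeasurableSet]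
  rw [show (volume : Measure (ℝ × (Fin n → ℝ))) = (volume : Measure ℝ).prod volume from rfl]
  rw [Measure.prod_apply_symm hmeas]
  rw [hims] at *
  have : (fun y => volume ((fun a => (a, y)) ⁻¹' {p : ℝ × (Fin n → ℝ) | Fin.cons p.1 p.2 ∈ S}))
      =ᵐ[volume] 0 := by
    filter_upwards [h] with y hy
    simpa using hy
  rw [lintegral_congr_ae this]
  simp

open MvPolynomial

lemma mv_zero_set_null : ∀ (n : ℕ) (p : MvPolynomial (Fin n) ℝ), p ≠ 0 →
    volume {x : Fin n → ℝ | eval x p = 0} = 0 := by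
  intro n
  induction n with
  | zero =>
    intro p hp
    have hc : p = C (p.coeff 0) := p.eq_C_of_isEmpty
    have hc0 : p.coeff 0 ≠ 0 := fun h => hp (by rw [hc, h, map_zero])
    have : {x : Fin 0 → ℝ | eval x p = 0} = ∅ := by
      ext x
      simp only [Set.mem_setOf_eq, Set.mem_empty_iff_false, iff_false]
      rw [hc]
      simpa using hc0
    rw [this]; simp
  | succ n ih =>
    intro p hp
    set Q := finSuccEquiv ℝ n p with hQdef
    have hQ : Q ≠ 0 := by
      simp only [hQdef, ne_eq, EmbeddingLike.map_eq_zero_iff]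
      exact hp
    have hlead : Q.leadingCoeff ≠ 0 := Polynomial.leadingCoeff_ne_zero.mpr hQ
    apply slice_null
    · exact (MvPolynomial.continuous_eval p).measurable (measurableSet_singleton 0)
    · have hae : ∀ᵐ y : Fin n → ℝ, ¬ (eval y Q.leadingCoeff = 0) :=
        measure_eq_zero_iff_ae_notMem.mp (ih Q.leadingCoeff hlead)
      filter_upwards [hae] with y hy
      have hQy : Q.map (eval y) ≠ 0 := by
        intro hcontra
        apply hy
        have := congrArg (fun r => Polynomial.coeff r Q.natDegree) hcontra
        simpa [Polynomial.coeff_map] using this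
      have hset : {a : ℝ | eval (Fin.cons a y) p = 0}
          = {a : ℝ | (Q.map (eval y)).eval a = 0} := by
        ext a
        simp only [Set.mem_setOf_eq]
        rw [eval_eq_eval_mv_eval']
      rw [hset]
      exact ((Polynomial.finite_setOf_isRoot hQy).measure_zero volume)

lemma mv_key (n : ℕ) (q : MvPolynomial (Fin (n + 1)) ℝ) (h : degreeOf 0 q ≠ 0)
    {A : Set ℝ} (hA : MeasurableSet A) (h0 : volume A = 0) :
    volume {x : Fin (n + 1) → ℝ | eval x q ∈ A} = 0 := by
  set Q := finSuccEquiv ℝ n q with hQdef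
  have hdeg : Q.natDegree ≠ 0 := by
    rw [hQdef, natDegree_finSuccEquiv]; exact h
  have hQ : Q ≠ 0 := fun hz => hdeg (by rw [hz]; simp)
  have hlead : Q.leadingCoeff ≠ 0 := Polynomial.leadingCoeff_ne_zero.mpr hQ
  apply slice_null
  · exact (MvPolynomial.continuous_eval q).measurable hA
  · have hae : ∀ᵐ y : Fin n → ℝ, ¬ (eval y Q.leadingCoeff = 0) :=
      measure_eq_zero_iff_ae_notMem.mp (mv_zero_set_null n Q.leadingCoeff hlead)
    filter_upwards [hae] with y hy
    have hdeg' : (Q.map (eval y)).natDegree ≠ 0 := by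
      rw [Polynomial.natDegree_map_of_leadingCoeff_ne_zero _ hy]
      exact hdeg
    have hset : {a : ℝ | eval (Fin.cons a y) q ∈ A}
        = {a : ℝ | (Q.map (eval y)).eval a ∈ A} := by
      ext a
      simp only [Set.mem_setOf_eq]
      rw [eval_eq_eval_mv_eval']
    rw [hset]
    exact poly1d_preimage_null _ hdeg' hA h0

/-- If `p` is a nonconstant real polynomial in `d` variables, then the pushforward of the
Lebesgue measure on `ℝ^d` under the evaluation of `p` is absolutely continuous with respect
to the Lebesgue measure on `ℝ`. -/
theorem stmt2 (d : ℕ) (hd : 1 ≤ d) (p : MvPolynomial (Fin d) ℝ)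
    (hp : ¬∃ c : ℝ, ∀ x : Fin d → ℝ, MvPolynomial.eval x p = c) :
    (volume : Measure (Fin d → ℝ)).map (fun x => MvPolynomial.eval x p) ≪
      (volume : Measure ℝ) := by
  obtain ⟨n, rfl⟩ : ∃ n, d = n + 1 := ⟨d - 1, (Nat.succ_pred_eq_of_pos hd).symm⟩
  have hex : ∃ i, degreeOf i p ≠ 0 := by
    by_contra hall
    push_neg at hall
    apply hp
    refine ⟨∑ m ∈ p.support, p.coeff m, fun x => ?_⟩
    rw [eval_eq]
    apply Finset.sum_congr rfl
    intro m hm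
    have hm0 : ∀ i, m i = 0 := by
      intro i
      have h1 := hall i
      rw [degreeOf_eq_sup] at h1
      exact Nat.le_zero.mp (h1 ▸ Finset.le_sup (f := fun m => m i) hm)
    have hone : ∏ i ∈ m.support, x i ^ m i = 1 := by
      apply Finset.prod_eq_one; intro i _; rw [hm0 i]; simp
    rw [hone, mul_one]
  obtain ⟨i, hi⟩ := hex
  set e : Fin (n + 1) ≃ Fin (n + 1) := Equiv.swap 0 i with he
  set q := rename e p with hqdef
  have hq0 : degreeOf 0 q ≠ 0 := by
    have h1 := degreeOf_rename_of_injective (p := p) e.injective i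
    have h2 : e i = 0 := Equiv.swap_apply_right 0 i
    rw [h2] at h1
    rw [hqdef, h1]
    exact hi
  have hmeas : Measurable fun x : Fin (n + 1) → ℝ => eval x p :=
    (continuous_eval p).measurable
  refine Measure.AbsolutelyContinuous.mk fun s hs h0 => ?_
  rw [Measure.map_apply hmeas hs]
  set G := MeasurableEquiv.piCongrLeft (fun _ : Fin (n + 1) => ℝ) e with hG
  have hpre : (fun x : Fin (n + 1) → ℝ => eval x p) ⁻¹' s
      = G ⁻¹' {x : Fin (n + 1) → ℝ | eval x q ∈ s} := by
    ext x
    simp only [Set.mem_preimage, Set.mem_setOf_eq]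
    have hGx : G x = x ∘ e := by
      funext j
      conv_lhs => rw [show j = e (e.symm j) by simp]
      rw [hG, MeasurableEquiv.piCongrLeft_apply_apply]
      have : e.symm j = e j := by rw [he, Equiv.symm_swap]
      rw [Function.comp_apply, this]
    rw [hGx, hqdef, eval_rename]
    have hxe : (x ∘ e) ∘ e = x := by
      funext j
      simp only [Function.comp_apply, he, Equiv.swap_apply_self]
    rw [hxe]
  rw [hpre]
  rw [(volume_measurePreserving_piCongrLeft (fun _ : Fin (n + 1) => ℝ) e).measure_preimage_equiv]
  exact mv_key n q hq0 hs h0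
end

section
/- Let G be a group, N a normal subgroup of G, and τ ∈ G an element such that G is generated by N together with τ (i.e. the subgroup generated by N ∪ {τ} is all of G). Then the subgroup of G generated by the set of commutators {[τ, g] : g ∈ N} is a normal subgroup of G. -/
open scoped commutatorElement

section aux

variable {G : Type*} [Group G]

/-- If conjugation by `x` maps a generating set of `K` into `K`, it maps `K` into `K`. -/
lemma conj_closure_le {S : Set G} (x : G)
    (hx : ∀ s ∈ S, x * s * x⁻¹ ∈ Subgroup.closure S) :
    ∀ k ∈ Subgroup.closure S, x * k * x⁻¹ ∈ Subgroup.closure S := by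
  intro k hk
  induction hk using Subgroup.closure_induction with
  | mem s hs => exact hx s hs
  | one => simpa using (Subgroup.closure S).one_mem
  | mul a b _ _ ha hb =>
    have : x * (a * b) * x⁻¹ = (x * a * x⁻¹) * (x * b * x⁻¹) := by group
    rw [this]; exact mul_mem ha hb
  | inv a _ ha =>
    have : x * a⁻¹ * x⁻¹ = (x * a * x⁻¹)⁻¹ := by group
    rw [this]; exact inv_mem ha

end aux

/-- If `G` is generated by a normal subgroup `N` together with an element `τ`, then the
subgroup generated by the commutators `{[τ, g] : g ∈ N}` is normal in `G`. -/
theorem stmt4 {G : Type*} [Group G] (N : Subgroup G) (hN : N.Normal) (τ : G)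
    (hgen : Subgroup.closure ((N : Set G) ∪ {τ}) = ⊤) :
    (Subgroup.closure {x : G | ∃ g ∈ N, x = ⁅τ, g⁆}).Normal := by
  set S : Set G := {x : G | ∃ g ∈ N, x = ⁅τ, g⁆} with hS
  set K := Subgroup.closure S with hK
  -- conjugation by τ maps generators into K
  have hτ : ∀ s ∈ S, τ * s * τ⁻¹ ∈ K := by
    rintro s ⟨g, hg, rfl⟩
    have : τ * ⁅τ, g⁆ * τ⁻¹ = ⁅τ, τ * g * τ⁻¹⁆ := by
      simp [commutatorElement_def]; group
    rw [this]
    exact Subgroup.subset_closure ⟨τ * g * τ⁻¹, hN.conj_mem g hg τ, rfl⟩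
  -- conjugation by τ⁻¹ maps generators into K
  have hτ' : ∀ s ∈ S, τ⁻¹ * s * τ⁻¹⁻¹ ∈ K := by
    rintro s ⟨g, hg, rfl⟩
    have : τ⁻¹ * ⁅τ, g⁆ * τ⁻¹⁻¹ = ⁅τ, τ⁻¹ * g * τ⁆ := by
      simp [commutatorElement_def]; group
    rw [this]
    refine Subgroup.subset_closure ⟨τ⁻¹ * g * τ, ?_, rfl⟩
    simpa using hN.conj_mem g hg τ⁻¹
  -- conjugation by elements of N maps generators into K
  have hNconj : ∀ n ∈ N, ∀ s ∈ S, n * s * n⁻¹ ∈ K := by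
    rintro n hn s ⟨g, hg, rfl⟩
    have : n * ⁅τ, g⁆ * n⁻¹ = ⁅τ, n⁆⁻¹ * ⁅τ, n * g⁆ := by
      simp [commutatorElement_def]; group
    rw [this]
    exact mul_mem (inv_mem (Subgroup.subset_closure ⟨n, hn, rfl⟩))
      (Subgroup.subset_closure ⟨n * g, mul_mem hn hg, rfl⟩)
  -- each generator of G is in the normalizer of K
  have hle : Subgroup.closure ((N : Set G) ∪ {τ}) ≤ Subgroup.normalizer (K : Set G) := by
    rw [Subgroup.closure_le]
    rintro x (hx | hx)
    · rw [SetLike.mem_coe, Subgroup.mem_normalizer_iff]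
      intro h
      constructor
      · intro hh; exact conj_closure_le x (hNconj x hx) h hh
      · intro hh
        have := conj_closure_le x⁻¹ (by simpa using hNconj x⁻¹ (inv_mem hx)) _ hh
        simpa [mul_assoc] using this
    · simp only [Set.mem_singleton_iff] at hx
      subst hx
      rw [SetLike.mem_coe, Subgroup.mem_normalizer_iff]
      intro h
      constructor
      · intro hh; exact conj_closure_le x hτ h hh
      · intro hh
        have := conj_closure_le x⁻¹ hτ' _ hh
        simpa [mul_assoc] using this
  rw [hgen] at hle
  have : Subgroup.normalizer (K : Set G) = ⊤ := top_le_iff.mp hle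
  exact Subgroup.normalizer_eq_top_iff.mp this
end

section
/- Let V be a finite-dimensional real vector space, let A : V → V be an invertible linear map which is unipotent (i.e. A − id is nilpotent), let W ⊆ V be a linear subspace, and let m ≥ 1 be an integer such that A^{km}(W) = W for every integer k ∈ ℤ. Then A^{n}(W) = W for every integer n ∈ ℤ; in particular A(W) = W. -/
open Polynomial Finset

lemma coe_pow_lm {V : Type*} [AddCommGroup V] [Module ℝ V] (A : V ≃ₗ[ℝ] V) (n : ℕ) :
    ((A ^ n : V ≃ₗ[ℝ] V) : V →ₗ[ℝ] V) = (A : V →ₗ[ℝ] V) ^ n := by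
  induction n with
  | zero => rfl
  | succ k ih => rw [pow_succ, pow_succ, ← ih]; rfl

lemma aux {V : Type*} [AddCommGroup V] [Module ℝ V] [FiniteDimensional ℝ V]
    (B : V →ₗ[ℝ] V) (hB : IsNilpotent (B - 1)) (W : Submodule ℝ V) (m : ℕ) (hm : 1 ≤ m)
    (h : ∀ k : ℕ, ∀ w ∈ W, (B ^ (k * m)) w ∈ W) :
    ∀ n : ℕ, ∀ w ∈ W, (B ^ n) w ∈ W := by
  obtain ⟨r, hr⟩ := hB
  set N : V →ₗ[ℝ] V := B - 1 with hNdef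
  have hBN : B = N + 1 := by rw [hNdef]; abel
  have hNk : ∀ k, r ≤ k → N ^ k = 0 := fun k hk => pow_eq_zero_of_le hk hr
  intro n w hw
  rw [← Subspace.dualAnnihilator_dualCoannihilator_eq (W := W),
    Submodule.mem_dualCoannihilator]
  intro φ hφ
  rw [Submodule.mem_dualAnnihilator] at hφ
  set f : ℕ → ℕ → ℝ := fun j k => (j.choose k : ℝ) * φ ((N ^ k) w) with hf
  -- key expansion
  have key : ∀ j : ℕ, φ ((B ^ j) w) = ∑ k ∈ Finset.range r, f j k := by
    intro j
    have expand : (B ^ j) w = ∑ k ∈ Finset.range (j + 1), (j.choose k : ℕ) • ((N ^ k) w) := by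
      rw [hBN, (Commute.one_right N).add_pow]
      simp only [one_pow, mul_one, LinearMap.sum_apply]
      refine Finset.sum_congr rfl fun k _ => ?_
      rw [Module.End.mul_apply]
      simp [Module.End.natCast_apply]
    have h1 : ∑ k ∈ Finset.range (j + 1), f j k = ∑ k ∈ Finset.range (max (j + 1) r), f j k :=
      Finset.sum_subset (Finset.range_subset_range.2 (le_max_left _ _)) (fun x _ hx => by
        rw [Finset.mem_range, not_lt] at hx
        simp [hf, Nat.choose_eq_zero_of_lt (by omega : j < x)])
    have h2 : ∑ k ∈ Finset.range r, f j k = ∑ k ∈ Finset.range (max (j + 1) r), f j k :=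
      Finset.sum_subset (Finset.range_subset_range.2 (le_max_right _ _)) (fun x _ hx => by
        rw [Finset.mem_range, not_lt] at hx
        simp [hf, hNk x hx])
    rw [expand, map_sum, h2, ← h1]
    refine Finset.sum_congr rfl fun k _ => ?_
    rw [hf, map_nsmul, nsmul_eq_mul]
  -- the polynomial
  set P : Polynomial ℝ :=
    ∑ k ∈ Finset.range r, Polynomial.C ((k.factorial : ℝ)⁻¹ * φ ((N ^ k) w)) *
      descPochhammer ℝ k with hP
  have hPeval : ∀ j : ℕ, P.eval (j : ℝ) = φ ((B ^ j) w) := by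
    intro j
    rw [key j, hP]
    simp only [Polynomial.eval_finset_sum, Polynomial.eval_mul, Polynomial.eval_C]
    refine Finset.sum_congr rfl fun k _ => ?_
    rw [descPochhammer_eval_eq_descFactorial, Nat.descFactorial_eq_factorial_mul_choose,
      hf]
    push_cast
    field_simp
  have hP0 : P = 0 := by
    refine Polynomial.eq_zero_of_infinite_isRoot _ ?_
    refine Set.infinite_of_injective_forall_mem
      (f := fun k : ℕ => ((k * m : ℕ) : ℝ)) ?_ ?_
    · intro a b hab
      have : a * m = b * m := Nat.cast_injective hab
      exact Nat.eq_of_mul_eq_mul_right hm this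
    · intro k
      show P.IsRoot _
      rw [Polynomial.IsRoot, hPeval (k * m)]
      exact hφ _ (h k w hw)
  have := hPeval n
  rw [hP0] at this
  simpa using this.symm

/-- If `A` is a unipotent linear automorphism of a finite-dimensional real vector space `V`,
`W` is a subspace, and `m ≥ 1` is such that `A^{km}(W) = W` for all integers `k`, then
`A^n(W) = W` for all integers `n`; in particular `A(W) = W`. -/
theorem stmt7 {V : Type*} [AddCommGroup V] [Module ℝ V] [FiniteDimensional ℝ V]
    (A : V ≃ₗ[ℝ] V) (hA : IsNilpotent ((A : V →ₗ[ℝ] V) - 1))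
    (W : Submodule ℝ V) (m : ℕ) (hm : 1 ≤ m)
    (h : ∀ k : ℤ, W.map ((A ^ (k * (m : ℤ)) : V ≃ₗ[ℝ] V) : V →ₗ[ℝ] V) = W) :
    (∀ n : ℤ, W.map ((A ^ n : V ≃ₗ[ℝ] V) : V →ₗ[ℝ] V) = W) ∧
      W.map ((A : V →ₗ[ℝ] V)) = W := by
  -- forward maps preserve W
  have hfwd : ∀ n : ℕ, ∀ w ∈ W, ((A : V →ₗ[ℝ] V) ^ n) w ∈ W := by
    apply aux _ hA W m hm
    intro k w hw
    have hk := h (k : ℤ)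
    rw [← hk]
    refine ⟨w, hw, ?_⟩
    have : (A ^ ((k : ℤ) * (m : ℤ)) : V ≃ₗ[ℝ] V) = A ^ (k * m : ℕ) := by
      rw [← zpow_natCast]; norm_cast
    rw [this, coe_pow_lm]
  -- backward maps preserve W
  have hAsymm : IsNilpotent ((A.symm : V →ₗ[ℝ] V) - 1) := by
    set N : V →ₗ[ℝ] V := (A : V →ₗ[ℝ] V) - 1 with hN
    set B : V →ₗ[ℝ] V := (A.symm : V →ₗ[ℝ] V) with hB
    have hBA : B * (A : V →ₗ[ℝ] V) = 1 := by
      ext v; simp [hB, Module.End.mul_apply]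
    have hAB : (A : V →ₗ[ℝ] V) * B = 1 := by
      ext v; simp [hB, Module.End.mul_apply]
    have hcomm : Commute B N := by
      have : Commute B (A : V →ₗ[ℝ] V) := by
        unfold Commute SemiconjBy
        rw [hBA, hAB]
      simpa [hN] using this.sub_right (Commute.one_right B)
    have : B - 1 = -(B * N) := by
      rw [hN, mul_sub, mul_one, hBA]; abel
    rw [this]
    exact (hcomm.isNilpotent_mul_left hA).neg
  have hbwd : ∀ n : ℕ, ∀ w ∈ W, ((A.symm : V →ₗ[ℝ] V) ^ n) w ∈ W := by
    apply aux _ hAsymm W m hm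
    intro k w hw
    have hk := h (-(k : ℤ))
    rw [← hk]
    refine ⟨w, hw, ?_⟩
    have : (A ^ ((-(k : ℤ)) * (m : ℤ)) : V ≃ₗ[ℝ] V) = (A.symm) ^ (k * m : ℕ) := by
      rw [neg_mul, zpow_neg, ← zpow_natCast]
      norm_cast
      rw [← inv_pow]
      rfl
    rw [this, coe_pow_lm]
  -- now conclude
  have hle : ∀ n : ℤ, W.map ((A ^ n : V ≃ₗ[ℝ] V) : V →ₗ[ℝ] V) ≤ W := by
    intro n
    rintro _ ⟨w, hw, rfl⟩
    obtain ⟨a, rfl | rfl⟩ := Int.eq_nat_or_neg n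
    · have : (A ^ (a : ℤ) : V ≃ₗ[ℝ] V) = A ^ a := zpow_natCast A a
      rw [this, coe_pow_lm]
      exact hfwd a w hw
    · have : (A ^ (-(a : ℤ)) : V ≃ₗ[ℝ] V) = (A.symm) ^ a := by
        rw [zpow_neg, ← zpow_natCast]
        norm_cast
        rw [← inv_pow]
        rfl
      rw [this, coe_pow_lm]
      exact hbwd a w hw
  have heq : ∀ n : ℤ, W.map ((A ^ n : V ≃ₗ[ℝ] V) : V →ₗ[ℝ] V) = W := by
    intro n
    refine Submodule.eq_of_le_of_finrank_le (hle n) ?_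
    rw [LinearEquiv.finrank_map_eq]
  refine ⟨heq, ?_⟩
  have := heq 1
  rwa [zpow_one] at this
end

section
/- Let G be the group of real 4×4 upper unitriangular matrices (upper triangular matrices with all diagonal entries equal to 1) under matrix multiplication, and let y_τ, u_τ ∈ (0,1). Let τ ∈ G be the matrix whose only nonzero off-diagonal entries are the (1,3)-entry equal to y_τ and the (2,3)-entry equal to u_τ. Then for every g ∈ G, if the commutator [τ, g] = τ·g·τ⁻¹·g⁻¹ commutes with every element of G (i.e. [τ,g] lies in the center Z(G)), then [τ, g] is the identity matrix. In other words, {[τ, g] : g ∈ G} ∩ Z(G) = {e_G}. -/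
open Matrix

/-- A matrix is upper unitriangular: ones on the diagonal, zeros below. -/
def IsUnitriangular (M : Matrix (Fin 4) (Fin 4) ℝ) : Prop :=
  (∀ i : Fin 4, M i i = 1) ∧ ∀ i j : Fin 4, j < i → M i j = 0

/-- The element τ of the 4-dimensional Heisenberg group with (1,3)-entry `yτ` and
(2,3)-entry `uτ` (1-based indexing), all other off-diagonal entries zero. -/
def heisTau (yτ uτ : ℝ) : Matrix (Fin 4) (Fin 4) ℝ :=
  fun i j =>
    if i = j then 1
    else if i = 0 ∧ j = 2 then yτ
    else if i = 1 ∧ j = 2 then uτ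
    else 0

/-- `I + E i j` as an explicit function matrix. -/
def elemAdd (i₀ j₀ : Fin 4) : Matrix (Fin 4) (Fin 4) ℝ :=
  fun i j => if i = j then 1 else if i = i₀ ∧ j = j₀ then 1 else 0

lemma elemAdd_unitri (i₀ j₀ : Fin 4) (h : i₀ < j₀) : IsUnitriangular (elemAdd i₀ j₀) := by
  constructor
  · intro i; simp [elemAdd]
  · intro i j hij
    have h1 : i ≠ j := (ne_of_lt hij).symm
    have h2 : ¬(i = i₀ ∧ j = j₀) := by
      rintro ⟨rfl, rfl⟩; exact absurd hij (not_lt_of_gt h)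
    simp [elemAdd, h1, h2]

lemma heisTau_eq (y u : ℝ) :
    heisTau y u = !![1,0,y,0; 0,1,u,0; 0,0,1,0; 0,0,0,1] := by
  ext i j
  fin_cases i <;> fin_cases j <;>
    simp [heisTau, Matrix.vecHead, Matrix.vecTail]

lemma heisTau_inv (y u : ℝ) :
    (heisTau y u)⁻¹ = !![1,0,-y,0; 0,1,-u,0; 0,0,1,0; 0,0,0,1] := by
  apply Matrix.inv_eq_right_inv
  rw [heisTau_eq]
  ext i j
  fin_cases i <;> fin_cases j <;>
    simp [Matrix.mul_apply, Fin.sum_univ_four, Matrix.vecHead, Matrix.vecTail]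

set_option maxHeartbeats 1600000 in
/-- In the 4-dimensional Heisenberg group, for τ as above with `yτ, uτ ∈ (0,1)`, no
nontrivial commutator `[τ, g]` lies in the center: if `[τ, g]` commutes with every
upper unitriangular matrix, then `[τ, g] = 1`. -/
theorem stmt11 (yτ uτ : ℝ) (hy : yτ ∈ Set.Ioo (0 : ℝ) 1) (hu : uτ ∈ Set.Ioo (0 : ℝ) 1)
    (g : Matrix (Fin 4) (Fin 4) ℝ) (hg : IsUnitriangular g)
    (hcenter : ∀ h : Matrix (Fin 4) (Fin 4) ℝ, IsUnitriangular h →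
      (heisTau yτ uτ * g * (heisTau yτ uτ)⁻¹ * g⁻¹) * h =
        h * (heisTau yτ uτ * g * (heisTau yτ uτ)⁻¹ * g⁻¹)) :
    heisTau yτ uτ * g * (heisTau yτ uτ)⁻¹ * g⁻¹ = 1 := by
  obtain ⟨hdiag, hlow⟩ := hg
  set a := g 0 1 with ha'
  set b := g 0 2 with hb'
  set c := g 0 3 with hc'
  set d := g 1 2 with hd'
  set e := g 1 3 with he'
  set f := g 2 3 with hf'
  have hgmat : g = !![1,a,b,c; 0,1,d,e; 0,0,1,f; 0,0,0,1] := by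
    ext i j
    fin_cases i <;> fin_cases j <;>
      simp [Matrix.vecHead, Matrix.vecTail,
        hdiag 0, hdiag 1, hdiag 2, hdiag 3,
        hlow 1 0 (by decide), hlow 2 0 (by decide), hlow 2 1 (by decide),
        hlow 3 0 (by decide), hlow 3 1 (by decide), hlow 3 2 (by decide),
          ha', hb', hc', hd', he', hf']
  have hginv : g⁻¹ = !![1,-a,a*d-b,-c+a*e+b*f-a*d*f; 0,1,-d,d*f-e; 0,0,1,-f; 0,0,0,1] := by
    apply Matrix.inv_eq_right_inv
    rw [hgmat]
    ext i j
    fin_cases i <;> fin_cases j <;>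
      · simp [Matrix.mul_apply, Fin.sum_univ_four, Matrix.vecHead, Matrix.vecTail]
        try ring
  have hem1 : elemAdd 0 1 = !![1,1,0,0; 0,1,0,0; 0,0,1,0; 0,0,0,1] := by
    ext i j
    fin_cases i <;> fin_cases j <;> simp [elemAdd, Matrix.vecHead, Matrix.vecTail]
  have hem2 : elemAdd 2 3 = !![1,0,0,0; 0,1,0,0; 0,0,1,1; 0,0,0,1] := by
    ext i j
    fin_cases i <;> fin_cases j <;> simp [elemAdd, Matrix.vecHead, Matrix.vecTail]
  have e1 := congrFun (congrFun (hcenter _ (elemAdd_unitri 0 1 (by decide))) 0) 3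
  have e2 := congrFun (congrFun (hcenter _ (elemAdd_unitri 2 3 (by decide))) 0) 3
  rw [heisTau_inv, heisTau_eq, hginv, hgmat, hem1] at e1
  rw [heisTau_inv, heisTau_eq, hginv, hgmat, hem2] at e2
  rw [heisTau_inv, heisTau_eq, hginv, hgmat]
  simp only [Matrix.mul_apply, Fin.sum_univ_four] at e1 e2
  simp [Matrix.vecHead, Matrix.vecTail] at e1 e2
  have hu0 : uτ ≠ 0 := ne_of_gt hu.1
  have hf0 : f = 0 := by
    rcases mul_eq_zero.mp (show uτ * f = 0 by nlinarith [e1]) with h | h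
    · exact absurd h hu0
    · exact h
  have ha0 : a = 0 := by
    rcases mul_eq_zero.mp (show uτ * a = 0 by nlinarith [e2]) with h | h
    · exact absurd h hu0
    · exact h
  ext i j
  fin_cases i <;> fin_cases j <;>
    · simp [Matrix.mul_apply, Fin.sum_univ_four, Matrix.vecHead, Matrix.vecTail,
        Matrix.one_apply, hf0, ha0]
      try ring
end
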